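/- Let μ be the Lie bracket on ℝ^7 with nonzero basis brackets [e1,e2]=e4, [e1,e4]=e5, [e1,e5]=e6, [e1,e6]=e7, [e2,e3]=e6+e7, [e3,e4]=-e7. Then φ = diag(0,1,0,1,1,1,1) is a derivation of (ℝ^7,μ) and φ is pre-Einstein, i.e. trace(φ∘ψ) = trace(ψ) for every derivation ψ of (ℝ^7,μ). -/

import Mathlib

open Finset

noncomputable section

/-- `ℝ⁷` with its standard basis and standard inner product. -/
abbrev V7 : Type := Fin 7 → ℝ

/-- The standard basis vector `e i`. -/
def e (i : Fin 7) : V7 := Pi.single i 1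

/-- The standard inner product on `ℝ⁷`. -/
def dot (x y : V7) : ℝ := ∑ i, x i * y i

/-- Structure constants built from a list of entries `(i, j, k, a)`, each meaning that
`μ (e i) (e j)` has component `a` along `e k` (and `μ (e j) (e i)` has component `-a`);
all unlisted basis brackets are `0`. -/
def toC (L : List (Fin 7 × Fin 7 × Fin 7 × ℝ)) (i j k : Fin 7) : ℝ :=
  (L.map fun t =>
      (if t.1 = i ∧ t.2.1 = j ∧ t.2.2.1 = k then t.2.2.2 else 0)
    - (if t.1 = j ∧ t.2.1 = i ∧ t.2.2.1 = k then t.2.2.2 else 0)).sum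

/-- The bilinear skew-symmetric map on `ℝ⁷` with structure constants `c`. -/
def br (c : Fin 7 → Fin 7 → Fin 7 → ℝ) (x y : V7) : V7 :=
  fun k => ∑ i, ∑ j, x i * y j * c i j k

lemma br_add_left (c : Fin 7 → Fin 7 → Fin 7 → ℝ) (x x' y : V7) :
    br c (x + x') y = br c x y + br c x' y := by
  funext k
  simp only [br, Pi.add_apply, ← Finset.sum_add_distrib]
  exact Finset.sum_congr rfl fun i _ => Finset.sum_congr rfl fun j _ => by ring

lemma br_smul_left (c : Fin 7 → Fin 7 → Fin 7 → ℝ) (r : ℝ) (x y : V7) :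
    br c (r • x) y = r • br c x y := by
  funext k
  simp only [br, Pi.smul_apply, smul_eq_mul, Finset.mul_sum]
  exact Finset.sum_congr rfl fun i _ => Finset.sum_congr rfl fun j _ => by ring

lemma br_add_right (c : Fin 7 → Fin 7 → Fin 7 → ℝ) (x y y' : V7) :
    br c x (y + y') = br c x y + br c x y' := by
  funext k
  simp only [br, Pi.add_apply, ← Finset.sum_add_distrib]
  exact Finset.sum_congr rfl fun i _ => Finset.sum_congr rfl fun j _ => by ring

lemma br_smul_right (c : Fin 7 → Fin 7 → Fin 7 → ℝ) (r : ℝ) (x y : V7) :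
    br c x (r • y) = r • br c x y := by
  funext k
  simp only [br, Pi.smul_apply, smul_eq_mul, Finset.mul_sum]
  exact Finset.sum_congr rfl fun i _ => Finset.sum_congr rfl fun j _ => by ring

lemma br_zero_left (c : Fin 7 → Fin 7 → Fin 7 → ℝ) (y : V7) : br c 0 y = 0 := by
  funext k; simp [br]

lemma br_zero_right (c : Fin 7 → Fin 7 → Fin 7 → ℝ) (x : V7) : br c x 0 = 0 := by
  funext k; simp [br]

/-- The space of derivations of the algebra `(ℝ⁷, br c)`, i.e. the linear maps `D` with
`D (μ x y) = μ (D x) y + μ x (D y)` for all `x, y`, as a submodule of the endomorphisms. -/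
def derivations (c : Fin 7 → Fin 7 → Fin 7 → ℝ) : Submodule ℝ (Module.End ℝ V7) where
  carrier := {D | ∀ x y, D (br c x y) = br c (D x) y + br c x (D y)}
  add_mem' := by
    intro D E hD hE x y
    simp only [LinearMap.add_apply, hD x y, hE x y, br_add_left, br_add_right]
    abel
  zero_mem' := by
    intro x y
    simp [br_zero_left, br_zero_right]
  smul_mem' := by
    intro r D hD x y
    simp only [LinearMap.smul_apply, hD x y, smul_add, br_smul_left, br_smul_right]

/-- The Jacobi identity for the bracket `br c`. -/
def Jacobi (c : Fin 7 → Fin 7 → Fin 7 → ℝ) : Prop :=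
  ∀ x y z : V7, br c (br c x y) z + br c (br c y z) x + br c (br c z x) y = 0

/-- Skew-symmetry of the bracket `br c`. -/
def Skew (c : Fin 7 → Fin 7 → Fin 7 → ℝ) : Prop :=
  ∀ x y : V7, br c x y = - br c y x

/-- The diagonal endomorphism `diag (a 1, …, a 7)` of `ℝ⁷`, `e i ↦ a i • e i`. -/
def diagL (a : Fin 7 → ℝ) : Module.End ℝ V7 :=
  LinearMap.pi fun i => a i • LinearMap.proj i

/-- Structure constants of the bracket with nonzero basis brackets
`[e1,e2]=e4, [e1,e4]=e5, [e1,e5]=e6, [e1,e6]=e7, [e2,e3]=e6+e7, [e3,e4]=-e7`. -/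
def c3 : Fin 7 → Fin 7 → Fin 7 → ℝ :=
  toC [(0, 1, 3, (1:ℝ)),
   (0, 3, 4, 1),
   (0, 4, 5, 1),
   (0, 5, 6, 1),
   (1, 2, 5, 1),
   (1, 2, 6, 1),
   (2, 3, 6, -1)]

lemma cons_five (a0 a1 a2 a3 a4 a5 a6 : ℝ) :
    (![a0,a1,a2,a3,a4,a5,a6] : Fin 7 → ℝ) 5 = a5 := rfl

lemma cons_six (a0 a1 a2 a3 a4 a5 a6 : ℝ) :
    (![a0,a1,a2,a3,a4,a5,a6] : Fin 7 → ℝ) 6 = a6 := rfl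

/-- Explicit formula for the bracket `br c3`. -/
def brX (x y : V7) : V7 :=
  ![0, 0, 0,
    x 0 * y 1 - x 1 * y 0,
    x 0 * y 3 - x 3 * y 0,
    x 0 * y 4 - x 4 * y 0 + x 1 * y 2 - x 2 * y 1,
    x 0 * y 5 - x 5 * y 0 + x 1 * y 2 - x 2 * y 1 - x 2 * y 3 + x 3 * y 2]

lemma br_eq (x y : V7) : br c3 x y = brX x y := by
  funext k; fin_cases k <;>
    simp [br, brX, c3, toC, Fin.sum_univ_seven, cons_five, cons_six] <;> ring

lemma skew_c3 : Skew c3 := by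
  intro x y
  rw [br_eq, br_eq]
  funext k; fin_cases k <;> simp [brX, cons_five, cons_six] <;> ring

lemma jacobi_c3 : Jacobi c3 := by
  intro x y z
  rw [br_eq x y, br_eq y z, br_eq z x, br_eq, br_eq, br_eq]
  funext k; fin_cases k <;> simp [brX, cons_five, cons_six] <;> ring

lemma phi_der : diagL ![0, 1, 0, 1, 1, 1, 1] ∈ derivations c3 := by
  show ∀ x y, _
  intro x y
  rw [br_eq, br_eq, br_eq]
  funext k
  fin_cases k <;>
    simp [brX, diagL, LinearMap.pi_apply, LinearMap.smul_apply, LinearMap.proj_apply,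
      cons_five, cons_six, Pi.add_apply, smul_eq_mul] <;> ring

lemma b01 : br c3 (e 0) (e 1) = e 3 := by
  funext k; fin_cases k <;> simp [br, e, c3, toC, Fin.sum_univ_seven, Pi.single_apply]
lemma b03 : br c3 (e 0) (e 3) = e 4 := by
  funext k; fin_cases k <;> simp [br, e, c3, toC, Fin.sum_univ_seven, Pi.single_apply]
lemma b04 : br c3 (e 0) (e 4) = e 5 := by
  funext k; fin_cases k <;> simp [br, e, c3, toC, Fin.sum_univ_seven, Pi.single_apply]
lemma b05 : br c3 (e 0) (e 5) = e 6 := by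
  funext k; fin_cases k <;> simp [br, e, c3, toC, Fin.sum_univ_seven, Pi.single_apply]
lemma b12 : br c3 (e 1) (e 2) = e 5 + e 6 := by
  funext k; fin_cases k <;> simp [br, e, c3, toC, Fin.sum_univ_seven, Pi.single_apply]
lemma b23 : br c3 (e 2) (e 3) = - e 6 := by
  funext k; fin_cases k <;> simp [br, e, c3, toC, Fin.sum_univ_seven, Pi.single_apply]

lemma trace_eq (f : Module.End ℝ V7) :
    LinearMap.trace ℝ V7 f = ∑ i, f (Pi.single i 1) i := by
  rw [LinearMap.trace_eq_matrix_trace ℝ (Pi.basisFun ℝ (Fin 7)) f, Matrix.trace]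
  simp [LinearMap.toMatrix_apply, Matrix.diag]

set_option maxHeartbeats 1000000 in
lemma preE (ψ : Module.End ℝ V7) (hψ : ψ ∈ derivations c3) :
    LinearMap.trace ℝ V7 (diagL ![0, 1, 0, 1, 1, 1, 1] ∘ₗ ψ) = LinearMap.trace ℝ V7 ψ := by
  have h01 := hψ (e 0) (e 1); rw [b01] at h01
  have h03 := hψ (e 0) (e 3); rw [b03] at h03
  have h04 := hψ (e 0) (e 4); rw [b04] at h04
  have h05 := hψ (e 0) (e 5); rw [b05] at h05
  have h12 := hψ (e 1) (e 2); rw [b12, map_add] at h12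
  have h23 := hψ (e 2) (e 3); rw [b23, map_neg] at h23
  have e1 := congrFun h01 1
  have e2 := congrFun h01 3
  have e3 := congrFun h01 4
  have e4 := congrFun h03 4
  have e5 := congrFun h03 5
  have e6 := congrFun h04 5
  have e7 := congrFun h04 6
  have e8 := congrFun h05 6
  have e9 := congrFun h12 5
  have e10 := congrFun h12 6
  have e11 := congrFun h23 5
  simp [br, e, c3, toC, Fin.sum_univ_seven, Pi.single_apply, Pi.add_apply, Pi.neg_apply] at e1
  simp [br, e, c3, toC, Fin.sum_univ_seven, Pi.single_apply, Pi.add_apply, Pi.neg_apply] at e2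
  simp [br, e, c3, toC, Fin.sum_univ_seven, Pi.single_apply, Pi.add_apply, Pi.neg_apply] at e3
  simp [br, e, c3, toC, Fin.sum_univ_seven, Pi.single_apply, Pi.add_apply, Pi.neg_apply] at e4
  simp [br, e, c3, toC, Fin.sum_univ_seven, Pi.single_apply, Pi.add_apply, Pi.neg_apply] at e5
  simp [br, e, c3, toC, Fin.sum_univ_seven, Pi.single_apply, Pi.add_apply, Pi.neg_apply] at e6
  simp [br, e, c3, toC, Fin.sum_univ_seven, Pi.single_apply, Pi.add_apply, Pi.neg_apply] at e7
  simp [br, e, c3, toC, Fin.sum_univ_seven, Pi.single_apply, Pi.add_apply, Pi.neg_apply] at e8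
  simp [br, e, c3, toC, Fin.sum_univ_seven, Pi.single_apply, Pi.add_apply, Pi.neg_apply] at e9
  simp [br, e, c3, toC, Fin.sum_univ_seven, Pi.single_apply, Pi.add_apply, Pi.neg_apply] at e10
  simp [br, e, c3, toC, Fin.sum_univ_seven, Pi.single_apply, Pi.add_apply, Pi.neg_apply] at e11
  rw [trace_eq, trace_eq]
  simp only [LinearMap.comp_apply, diagL, LinearMap.pi_apply, LinearMap.smul_apply,
    LinearMap.proj_apply, Fin.sum_univ_seven, Matrix.cons_val_zero, Matrix.cons_val_one,
    Matrix.head_cons, smul_eq_mul]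
  norm_num [show (![0, 1, 0, 1, 1, 1, 1] : Fin 7 → ℝ) 2 = 0 from rfl,
    show (![0, 1, 0, 1, 1, 1, 1] : Fin 7 → ℝ) 3 = 1 from rfl,
    show (![0, 1, 0, 1, 1, 1, 1] : Fin 7 → ℝ) 4 = 1 from rfl,
    show (![0, 1, 0, 1, 1, 1, 1] : Fin 7 → ℝ) 5 = 1 from rfl,
    show (![0, 1, 0, 1, 1, 1, 1] : Fin 7 → ℝ) 6 = 1 from rfl]
  linarith [e1, e2, e3, e4, e5, e6, e7, e8, e9, e10, e11]


/-- The bracket satisfies the Jacobi identity (and is skew-symmetric), `φ` is a derivation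
of it, and `φ` is pre-Einstein: `trace (φ ∘ ψ) = trace ψ` for every derivation `ψ`. -/
theorem stmt :
    Skew c3 ∧ Jacobi c3 ∧
    diagL ![0, 1, 0, 1, 1, 1, 1] ∈ derivations c3 ∧
    ∀ ψ ∈ derivations c3,
      LinearMap.trace ℝ V7 (diagL ![0, 1, 0, 1, 1, 1, 1] ∘ₗ ψ) = LinearMap.trace ℝ V7 ψ := by
  exact ⟨skew_c3, jacobi_c3, phi_der, preE⟩
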